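/- Let p be an odd prime, r = (p−1)/2, and λ ∈ 𝔽_p. Then ∑_{a ∈ 𝔽_p} ( a·(a−1)·(a−λ) )^{r} = (−1)^{r+1} · ∑_{i=0}^{r} (binom(r,i))² · λ^i in 𝔽_p, where binom(r,i) denotes the binomial coefficient reduced mod p. (The polynomial H(λ) = ∑_{i=0}^{r} binom(r,i)² λ^i is the Deuring polynomial, whose roots are the λ for which the elliptic curve y² = x(x−1)(x−λ) is supersingular.) -/

import Mathlib

open Polynomial Finset

lemma sum_pow_zmod_aux (p : ℕ) [Fact p.Prime] (k : ℕ) (hk : k ≠ 0) :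
    ∑ a : ZMod p, a ^ k = if (p - 1) ∣ k then -1 else 0 := by
  classical
  have h := FiniteField.sum_pow_units (ZMod p) k
  rw [ZMod.card] at h
  let φ : (ZMod p)ˣ ↪ ZMod p := ⟨fun x ↦ x, fun _ _ => Units.ext⟩
  have hφ : (univ : Finset (ZMod p)ˣ).map φ = univ \ {0} := by
    ext x
    simp only [mem_map, mem_univ, Function.Embedding.coeFn_mk, true_and, mem_sdiff,
      mem_singleton, φ]
    exact isUnit_iff_ne_zero
  calc ∑ a : ZMod p, a ^ k
      = ∑ a ∈ univ \ {(0 : ZMod p)}, a ^ k := by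
        rw [← Finset.sum_sdiff (Finset.subset_univ {0}), Finset.sum_singleton,
          zero_pow hk, add_zero]
    _ = ∑ x : (ZMod p)ˣ, (x : ZMod p) ^ k := by
        rw [← hφ, Finset.sum_map]; rfl
    _ = _ := h

/-- Deuring polynomial identity: for an odd prime `p`, `r = (p-1)/2` and `λ ∈ 𝔽_p`,
`∑_{a ∈ 𝔽_p} (a(a-1)(a-λ))^r = (-1)^(r+1) · ∑_{i=0}^{r} binom(r,i)² λ^i`. -/
theorem sum_cubic_pow_eq_deuring (p : ℕ) [Fact p.Prime] (hp : p ≠ 2)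
    (r : ℕ) (hr : r = (p - 1) / 2) (lam : ZMod p) :
    ∑ a : ZMod p, (a * (a - 1) * (a - lam)) ^ r =
      (-1) ^ (r + 1) *
        ∑ i ∈ Finset.range (r + 1), ((r.choose i : ZMod p)) ^ 2 * lam ^ i := by
  classical
  have hpp : p.Prime := Fact.out
  have hodd : p % 2 = 1 := Nat.odd_iff.mp (hpp.odd_of_ne_two hp)
  have hp2 : 2 ≤ p := hpp.two_le
  have h2r : p - 1 = 2 * r := by omega
  have hr1 : 1 ≤ r := by omega
  -- coefficient function
  set C : ℕ → ℕ → ZMod p := fun j i =>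
    (-1) ^ (j + r) * (r.choose j : ZMod p) *
      ((-1) ^ (i + r) * lam ^ (r - i) * (r.choose i : ZMod p)) with hC
  have expand : ∀ a : ZMod p, (a * (a - 1) * (a - lam)) ^ r
      = ∑ j ∈ range (r + 1), ∑ i ∈ range (r + 1), C j i * a ^ (r + j + i) := by
    intro a
    rw [mul_pow, mul_pow, sub_pow, sub_pow]
    simp only [Finset.mul_sum, Finset.sum_mul]
    rw [Finset.sum_comm]
    refine Finset.sum_congr rfl fun j hj => Finset.sum_congr rfl fun i hi => ?_
    simp only [one_pow, hC]
    ring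
  calc ∑ a : ZMod p, (a * (a - 1) * (a - lam)) ^ r
      = ∑ j ∈ range (r + 1), ∑ i ∈ range (r + 1), C j i * ∑ a : ZMod p, a ^ (r + j + i) := by
        simp_rw [expand]
        rw [Finset.sum_comm]
        exact Finset.sum_congr rfl fun j _ => by
          rw [Finset.sum_comm]
          exact Finset.sum_congr rfl fun i _ => by rw [← Finset.mul_sum]
    _ = ∑ j ∈ range (r + 1), ∑ i ∈ range (r + 1),
          C j i * (if i = r - j then (-1 : ZMod p) else 0) := by
        refine Finset.sum_congr rfl fun j hj => Finset.sum_congr rfl fun i hi => ?_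
        rw [mem_range] at hj hi
        rw [sum_pow_zmod_aux p (r + j + i) (by omega), h2r]
        congr 1
        have : (2 * r ∣ r + j + i) ↔ (i = r - j) := by
          constructor
          · intro hd
            have := Nat.eq_of_dvd_of_lt_two_mul (by omega) hd (by omega)
            omega
          · intro h; exact ⟨1, by omega⟩
        simp [this]
    _ = ∑ j ∈ range (r + 1), C j (r - j) * (-1) := by
        refine Finset.sum_congr rfl fun j hj => ?_
        simp_rw [mul_ite, mul_zero]
        rw [Finset.sum_ite_eq' (range (r + 1)) (r - j) (fun i => C j i * (-1)),
          if_pos (by rw [mem_range]; omega)]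
    _ = ∑ j ∈ range (r + 1), (-1) ^ (r + 1) * ((r.choose j : ZMod p)) ^ 2 * lam ^ j := by
        refine Finset.sum_congr rfl fun j hj => ?_
        rw [mem_range] at hj
        have hjr : j ≤ r := by omega
        have h1 : r - (r - j) = j := by omega
        have h2 : r.choose (r - j) = r.choose j := Nat.choose_symm hjr
        have hsign : ((-1 : ZMod p)) ^ (j + r) * (-1) ^ ((r - j) + r) * (-1)
            = (-1) ^ (r + 1) := by
          rw [← pow_add]
          have he : j + r + (r - j + r) = 2 * r + r := by omega
          rw [he, pow_add, pow_mul, neg_one_sq, one_pow, one_mul, ← pow_succ]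
        rw [hC]
        simp only [h1, h2]
        calc (-1 : ZMod p) ^ (j + r) * (r.choose j : ZMod p) *
              ((-1) ^ (r - j + r) * lam ^ j * (r.choose j : ZMod p)) * (-1)
            = ((-1 : ZMod p)) ^ (j + r) * (-1) ^ ((r - j) + r) * (-1) *
                (((r.choose j : ZMod p)) ^ 2 * lam ^ j) := by ring
          _ = _ := by rw [hsign]; ring
    _ = _ := by
        rw [Finset.mul_sum]
        exact Finset.sum_congr rfl fun j _ => by ring
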